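/- Let k be even. Every weighted graph G of order n ≥ k admits a k-partition (X₁,…,X_k) with w(X₁,…,X_k) ≥ ((k−1)/k)·w(G) + ((k−1)/(2k))·(1 − (k−2)²/(4(n−1)(k−1)))·d_w(G). -/

import Mathlib

open Finset

/-- Total weight of the graph: half the sum of `w u v` over ordered pairs. -/
noncomputable def totalW {V : Type} [Fintype V] (w : V → V → ℝ) : ℝ := (∑ u, ∑ v, w u v) / 2

/-- Weight of the cut between `X` and `Y`. -/
noncomputable def cutW {V : Type} (w : V → V → ℝ) (X Y : Finset V) : ℝ := ∑ u ∈ X, ∑ v ∈ Y, w u v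

/-- Weight of the edges inside `S`. -/
noncomputable def insideW {V : Type} (w : V → V → ℝ) (S : Finset V) : ℝ := (∑ u ∈ S, ∑ v ∈ S, w u v) / 2

/-- Weighted degree of a vertex. -/
noncomputable def wdeg {V : Type} [Fintype V] (w : V → V → ℝ) (v : V) : ℝ := ∑ u, w v u

/-- Maximum weighted degree. -/
noncomputable def maxDeg {V : Type} [Fintype V] (w : V → V → ℝ) : ℝ := ⨆ v, wdeg w v

/-- Weight from `v` into the set `S`. -/
noncomputable def wS {V : Type} (w : V → V → ℝ) (S : Finset V) (v : V) : ℝ := ∑ x ∈ S, w v x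

/-- Total cross-part weight of a `k`-partition. -/
noncomputable def kcutW {V : Type} (w : V → V → ℝ) {k : ℕ} (X : Fin k → Finset V) : ℝ :=
  (∑ i, ∑ j, if i = j then 0 else cutW w (X i) (X j)) / 2

/-- `X` is a partition of `V` into `k` nonempty pairwise disjoint parts. -/
def IsPartition {V : Type} {k : ℕ} (X : Fin k → Finset V) : Prop :=
  (∀ i, (X i).Nonempty) ∧ (∀ i j, i ≠ j → Disjoint (X i) (X j)) ∧ (∀ v, ∃ i, v ∈ X i)

/-- Number of elements of `Fin n` congruent to `i` mod `k`. -/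
lemma fin_mod_card (n k : ℕ) (hk : 0 < k) (i : ℕ) (hi : i < k) :
    (univ.filter (fun a : Fin n => (a : ℕ) % k = i)).card
      = n / k + if i < n % k then 1 else 0 := by
  set q := n / k with hq
  set r := n % k with hr
  set m : ℕ := q + if i < r then 1 else 0 with hm
  have hnr : n = k * q + r := (Nat.div_add_mod n k).symm
  have hrk : r < k := Nat.mod_lt _ hk
  have key : (univ.filter (fun a : Fin n => (a : ℕ) % k = i))
      = (range m).attach.image (fun t =>
          (⟨k * t.1 + i, by
            have ht := t.2
            rw [mem_range] at ht
            by_cases hc : i < r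
            · simp only [hm, hc, if_pos] at ht
              have : t.1 ≤ q := by omega
              have : k * t.1 ≤ k * q := Nat.mul_le_mul_left k this
              omega
            · simp only [hm, hc, if_neg, not_false_iff, add_zero] at ht
              have : t.1 + 1 ≤ q := ht
              have : k * (t.1 + 1) ≤ k * q := Nat.mul_le_mul_left k this
              have : k * t.1 + k ≤ k * q := by rw [Nat.mul_add, Nat.mul_one] at this; omega
              omega⟩ : Fin n)) := by
    ext a
    simp only [mem_filter, mem_univ, true_and, mem_image, mem_attach, Subtype.exists, mem_range]
    constructor
    · intro ha
      refine ⟨(a : ℕ) / k, ?_, ?_⟩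
      · by_cases hc : i < r
        · simp only [hm, hc, if_pos]
          have h1 : (a:ℕ) < n := a.2
          by_contra hcon
          push_neg at hcon
          have : q + 1 ≤ (a:ℕ)/k := by omega
          have : k * (q+1) ≤ k * ((a:ℕ)/k) := Nat.mul_le_mul_left k this
          have h2 : k * ((a:ℕ)/k) + (a:ℕ) % k = (a:ℕ) := Nat.div_add_mod _ _
          have : k * q + k ≤ k * ((a:ℕ)/k) := by rw [Nat.mul_add, Nat.mul_one] at this; omega
          omega
        · simp only [hm, hc, if_neg, not_false_iff, add_zero]
          have h1 : (a:ℕ) < n := a.2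
          by_contra hcon
          push_neg at hcon
          have : k * q ≤ k * ((a:ℕ)/k) := Nat.mul_le_mul_left k hcon
          have h2 : k * ((a:ℕ)/k) + (a:ℕ) % k = (a:ℕ) := Nat.div_add_mod _ _
          omega
      · apply Fin.ext
        have h2 : k * ((a:ℕ)/k) + (a:ℕ) % k = (a:ℕ) := Nat.div_add_mod _ _
        simp only [← ha]
        omega
    · rintro ⟨t, ht, rfl⟩
      simp only []
      show (k * t + i) % k = i
      rw [Nat.mul_comm, Nat.add_comm, Nat.add_mul_mod_self_right, Nat.mod_eq_of_lt hi]
  rw [key, Finset.card_image_of_injective _ ?_, Finset.card_attach, Finset.card_range]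
  intro s t hst
  have h : k * s.1 + i = k * t.1 + i := by exact congrArg Fin.val hst
  have : s.1 = t.1 := by
    have := Nat.add_right_cancel h
    exact Nat.eq_of_mul_eq_mul_left hk this
  exact Subtype.ext this

/-- Sums over permutations of a function of an ordered pair of distinct points
do not depend on the pair. -/
lemma perm_pair_sum {V : Type} [Fintype V] [DecidableEq V] (F : V → V → ℝ)
    {u v u' v' : V} (huv : u ≠ v) (huv' : u' ≠ v') :
    ∑ σ : Equiv.Perm V, F (σ u) (σ v) = ∑ σ : Equiv.Perm V, F (σ u') (σ v') := by
  classical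
  set v₁ := Equiv.swap u' u v' with hv1
  have hv1u : v₁ ≠ u := by
    rcases eq_or_ne v' u with h | h
    · have hne : u' ≠ u := fun hc => huv' (by rw [hc, h])
      rw [hv1, h, Equiv.swap_apply_right]
      exact hne
    · rw [hv1, Equiv.swap_apply_of_ne_of_ne huv'.symm h]
      exact h
  set τ : Equiv.Perm V := (Equiv.swap v₁ v) * (Equiv.swap u' u) with hτ
  have hτu : τ u' = u := by
    rw [hτ, Equiv.Perm.mul_apply, Equiv.swap_apply_left,
      Equiv.swap_apply_of_ne_of_ne hv1u.symm huv]
  have hτv : τ v' = v := by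
    rw [hτ, Equiv.Perm.mul_apply, ← hv1, Equiv.swap_apply_left]
  calc ∑ σ : Equiv.Perm V, F (σ u) (σ v)
      = ∑ σ : Equiv.Perm V, F ((σ * τ) u') ((σ * τ) v') := by
        simp only [Equiv.Perm.mul_apply, hτu, hτv]
    _ = ∑ σ : Equiv.Perm V, F (σ u') (σ v') :=
        Fintype.sum_equiv (Equiv.mulRight τ) _ _ (fun σ => rfl)

/-- The `k`-cut of the fibre partition of `g` as a double sum. -/
lemma kcut_fiber {V : Type} [Fintype V] [DecidableEq V] {k : ℕ} (w : V → V → ℝ) (g : V → Fin k) :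
    kcutW w (fun i => univ.filter (fun x => g x = i)) =
      (∑ u, ∑ v, if g u = g v then 0 else w u v) / 2 := by
  unfold kcutW
  congr 1
  have step : ∀ i j : Fin k, (if i = j then (0:ℝ) else
      cutW w (univ.filter (fun x => g x = i)) (univ.filter (fun x => g x = j)))
      = ∑ u, ∑ v, if g u = i then (if g v = j then (if i = j then 0 else w u v) else 0) else 0 := by
    intro i j
    by_cases h : i = j
    · simp [h]
    · simp only [h, if_false, cutW, Finset.sum_filter]
      refine Finset.sum_congr rfl fun a _ => ?_
      by_cases ha : g a = i <;> simp [ha]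
  simp only [step]
  have rhs : ∀ u v : V, (if g u = g v then (0:ℝ) else w u v)
      = ∑ i, ∑ j, (if g u = i then (if g v = j then (if i = j then 0 else w u v) else 0) else 0) := by
    intro u v
    simp [Finset.sum_ite_eq]
  calc ∑ i, ∑ j, ∑ u, ∑ v, (if g u = i then (if g v = j then (if i = j then (0:ℝ) else w u v) else 0) else 0)
      = ∑ i, ∑ u, ∑ j, ∑ v, _ := Finset.sum_congr rfl (fun i _ => Finset.sum_comm)
    _ = ∑ u, ∑ i, ∑ j, ∑ v, _ := Finset.sum_comm
    _ = ∑ u, ∑ i, ∑ v, ∑ j, _ := Finset.sum_congr rfl (fun u _ =>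
          Finset.sum_congr rfl (fun i _ => Finset.sum_comm))
    _ = ∑ u, ∑ v, ∑ i, ∑ j, _ := Finset.sum_congr rfl (fun u _ => Finset.sum_comm)
    _ = ∑ u, ∑ v, (if g u = g v then 0 else w u v) := by
          refine Finset.sum_congr rfl fun u _ => Finset.sum_congr rfl fun v _ => ?_
          rw [← rhs]

/-- The key numeric inequality. -/
lemma keyineq (K Q R : ℝ) (hk : 2 ≤ K) (hq : 1 ≤ Q) (hr0 : 0 ≤ R) :
    (K-1)/K + (K-1)/(K*(K*Q+R)) * (1 - (K-2)^2/(4*((K*Q+R)-1)*(K-1)))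
      ≤ ((K*Q+R)^2 - (K*Q^2 + 2*Q*R + R))/((K*Q+R)*((K*Q+R)-1)) := by
  set N : ℝ := K*Q+R with hN
  have hK0 : (0:ℝ) < K := by linarith
  have hNK : K ≤ N := by nlinarith
  have hN1 : (1:ℝ) < N := by linarith
  have hN0 : (0:ℝ) < N := by linarith
  have hK1 : (0:ℝ) < K - 1 := by linarith
  have hN1' : N - 1 ≠ 0 := by linarith
  rw [← sub_nonneg]
  have iden : ((N^2 - (K*Q^2 + 2*Q*R + R))/(N*(N-1)))
      - ((K-1)/K + (K-1)/(K*N) * (1 - (K-2)^2/(4*(N-1)*(K-1))))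
      = (K - 2*R)^2 / (4*K*N*(N-1)) := by
    have hN1'' : K*Q+R-1 ≠ 0 := by rw [← hN]; exact hN1'
    rw [hN]
    field_simp
    ring
  rw [iden]
  apply div_nonneg (sq_nonneg _)
  have : (0:ℝ) < 4*K*N*(N-1) := by
    apply mul_pos (mul_pos (mul_pos four_pos hK0) hN0); linarith
  linarith

theorem stmt11 (k : ℕ) (hk : 2 ≤ k) (hke : Even k) (V : Type) [Fintype V] [DecidableEq V]
    (hcard : k ≤ Fintype.card V) (w : V → V → ℝ)
    (hsym : ∀ u v, w u v = w v u) (hnn : ∀ u v, 0 ≤ w u v) (hdiag : ∀ v, w v v = 0) :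
    ∃ X : Fin k → Finset V, IsPartition X ∧
      kcutW w X ≥ ((k : ℝ) - 1) / k * totalW w +
        ((k : ℝ) - 1) / (2 * k) *
          (1 - ((k : ℝ) - 2) ^ 2 / (4 * ((Fintype.card V : ℝ) - 1) * ((k : ℝ) - 1))) *
          (2 * totalW w / (Fintype.card V : ℝ)) := by
  classical
  set n := Fintype.card V with hn
  have hk0 : 0 < k := by omega
  have hn2 : 2 ≤ n := le_trans hk hcard
  set q := n / k with hq
  set r := n % k with hr
  have hq1 : 1 ≤ q := (Nat.one_le_div_iff hk0).mpr hcard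
  have hnqr : n = k * q + r := (Nat.div_add_mod n k).symm
  have hrk : r < k := Nat.mod_lt _ hk0
  let e : V ≃ Fin n := Fintype.equivFin V
  let c : V → Fin k := fun v => ⟨(e v : ℕ) % k, Nat.mod_lt _ hk0⟩
  -- fibre sizes of c
  have hfib : ∀ i : Fin k, (univ.filter (fun v => c v = i)).card
      = q + if (i:ℕ) < r then 1 else 0 := by
    intro i
    rw [← fin_mod_card n k hk0 i i.2]
    apply Finset.card_bij (fun v _ => e v)
    · intro a ha
      simp only [mem_filter, mem_univ, true_and] at ha ⊢
      exact congrArg Fin.val ha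
    · intro a _ b _ hab
      exact e.injective hab
    · intro b hb
      refine ⟨e.symm b, ?_, by simp⟩
      simp only [mem_filter, mem_univ, true_and] at hb ⊢
      apply Fin.ext
      simpa [c] using hb
  -- the indicator function
  set F : V → V → ℝ := fun x y => if c x = c y then 0 else 1 with hF
  -- a fixed distinct pair
  obtain ⟨u₀, v₀, hu₀v₀⟩ := Fintype.exists_pair_of_one_lt_card (by omega : 1 < Fintype.card V)
  set M : ℝ := ∑ σ : Equiv.Perm V, F (σ u₀) (σ v₀) with hM
  -- A u v is constant off the diagonal, zero on it
  have hA : ∀ u v : V, u ≠ v → (∑ σ : Equiv.Perm V, F (σ u) (σ v)) = M :=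
    fun u v huv => perm_pair_sum F huv hu₀v₀
  -- the partition for σ
  set X : Equiv.Perm V → Fin k → Finset V :=
    fun σ i => univ.filter (fun x => c (σ x) = i) with hX
  have hXpart : ∀ σ, IsPartition (X σ) := by
    intro σ
    refine ⟨?_, ?_, ?_⟩
    · intro i
      refine ⟨σ.symm (e.symm ⟨(i:ℕ), lt_of_lt_of_le i.2 hcard⟩), ?_⟩
      simp only [hX, mem_filter, mem_univ, true_and, Equiv.apply_symm_apply]
      apply Fin.ext
      simp [c, Nat.mod_eq_of_lt i.2]
    · intro i j hij
      rw [Finset.disjoint_left]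
      intro a ha hb
      simp only [hX, mem_filter, mem_univ, true_and] at ha hb
      exact hij (ha ▸ hb ▸ rfl)
    · intro v
      exact ⟨c (σ v), by simp [hX]⟩
  -- the cut value of the partition for σ
  have hXcut : ∀ σ : Equiv.Perm V,
      kcutW w (X σ) = (∑ u, ∑ v, w u v * F (σ u) (σ v)) / 2 := by
    intro σ
    rw [hX]
    rw [kcut_fiber w (fun x => c (σ x))]
    congr 1
    refine Finset.sum_congr rfl fun u _ => Finset.sum_congr rfl fun v _ => ?_
    rw [hF]
    by_cases h : c (σ u) = c (σ v) <;> simp [h]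
  -- total over σ
  set P : ℕ := Fintype.card (Equiv.Perm V) with hP
  have hPpos : 0 < P := Fintype.card_pos
  have hsum_tot : ∑ σ : Equiv.Perm V, (∑ u, ∑ v, w u v * F (σ u) (σ v))
      = (2 * totalW w) * M := by
    rw [Finset.sum_comm]
    have : ∀ u : V, ∑ σ : Equiv.Perm V, ∑ v, w u v * F (σ u) (σ v)
        = ∑ v, w u v * M := by
      intro u
      rw [Finset.sum_comm]
      refine Finset.sum_congr rfl fun v _ => ?_
      rcases eq_or_ne u v with rfl | huv
      · simp [hdiag u]
      · rw [← Finset.mul_sum, hA u v huv]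
    simp only [this, ← Finset.sum_mul]
    unfold totalW
    ring
  -- the total indicator count
  set T : ℝ := ∑ x, ∑ y, F x y with hT
  have hσT : ∀ σ : Equiv.Perm V, ∑ u, ∑ v, F (σ u) (σ v) = T := by
    intro σ
    rw [hT]
    calc ∑ u, ∑ v, F (σ u) (σ v)
        = ∑ u, ∑ v, F (σ u) v :=
          Finset.sum_congr rfl fun u _ => Equiv.sum_comp σ (F (σ u))
      _ = ∑ u, ∑ v, F u v := Equiv.sum_comp σ (fun u => ∑ v, F u v)
  have hcount : (n:ℝ) * ((n:ℝ) - 1) * M = (P:ℝ) * T := by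
    have hgrid : ∑ u, ∑ v, (∑ σ : Equiv.Perm V, F (σ u) (σ v)) = (P:ℝ) * T :=
      calc ∑ u, ∑ v, (∑ σ : Equiv.Perm V, F (σ u) (σ v))
          = ∑ u, ∑ σ : Equiv.Perm V, ∑ v, F (σ u) (σ v) :=
            Finset.sum_congr rfl fun u _ => Finset.sum_comm
        _ = ∑ σ : Equiv.Perm V, ∑ u, ∑ v, F (σ u) (σ v) := Finset.sum_comm
        _ = ∑ _σ : Equiv.Perm V, T := Finset.sum_congr rfl fun σ _ => hσT σ
        _ = (P:ℝ) * T := by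
            rw [Finset.sum_const, Finset.card_univ, ← hP, nsmul_eq_mul]
    have hgrid2 : ∑ u, ∑ v, (∑ σ : Equiv.Perm V, F (σ u) (σ v))
        = (n:ℝ) * ((n:ℝ) - 1) * M := by
      have hdiagA : ∀ u : V, (∑ σ : Equiv.Perm V, F (σ u) (σ u)) = 0 := by
        intro u
        rw [hF]
        simp
      have hrow : ∀ u : V, ∑ v, (∑ σ : Equiv.Perm V, F (σ u) (σ v))
          = ((n:ℝ) - 1) * M := by
        intro u
        have : ∀ v : V, (∑ σ : Equiv.Perm V, F (σ u) (σ v))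
            = M - (if u = v then M else 0) := by
          intro v
          rcases eq_or_ne u v with rfl | huv
          · simp [hdiagA u]
          · simp [huv, hA u v huv]
        simp only [this, Finset.sum_sub_distrib, Finset.sum_const, Finset.card_univ,
          Finset.sum_ite_eq, mem_univ, if_true, nsmul_eq_mul, ← hn]
        ring
      simp only [hrow, Finset.sum_const, Finset.card_univ, nsmul_eq_mul, ← hn]
      ring
    rw [← hgrid2, hgrid]
  -- compute T from the fibre sizes
  have hTval : T = (n:ℝ)^2 - ((k:ℝ)*(q:ℝ)^2 + 2*(q:ℝ)*(r:ℝ) + (r:ℝ)) := by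
    have h1 : ∀ x y : V, F x y = 1 - (if c x = c y then (1:ℝ) else 0) := by
      intro x y
      by_cases h : c x = c y <;> simp [hF, h]
    have h2 : ∀ x : V, (∑ y, if c x = c y then (1:ℝ) else 0)
        = ((univ.filter (fun v => c v = c x)).card : ℝ) := by
      intro x
      have hfe : (univ.filter fun y => c x = c y) = (univ.filter fun v => c v = c x) := by
        ext y
        simp [eq_comm]
      rw [Finset.sum_boole, hfe]
    have h3 : ∑ x : V, ((univ.filter (fun v => c v = c x)).card : ℝ)
        = ∑ i : Fin k, ((univ.filter (fun v => c v = i)).card : ℝ)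
            * ((univ.filter (fun v => c v = i)).card : ℝ) := by
      rw [← Finset.sum_fiberwise (univ : Finset V) c
        (fun x => ((univ.filter (fun v => c v = c x)).card : ℝ))]
      refine Finset.sum_congr rfl fun i _ => ?_
      rw [Finset.sum_congr rfl (fun x hx => ?_), Finset.sum_const, nsmul_eq_mul]
      rw [(Finset.mem_filter.mp hx).2]
    have h4 : ∑ i : Fin k, ((univ.filter (fun v => c v = i)).card : ℝ)
            * ((univ.filter (fun v => c v = i)).card : ℝ)
        = (k:ℝ)*(q:ℝ)^2 + 2*(q:ℝ)*(r:ℝ) + (r:ℝ) := by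
      have h5 : ∀ i : Fin k, ((univ.filter (fun v => c v = i)).card : ℝ)
            * ((univ.filter (fun v => c v = i)).card : ℝ)
          = (q:ℝ)^2 + (2*(q:ℝ)+1) * (if (i:ℕ) < r then (1:ℝ) else 0) := by
        intro i
        rw [hfib i]
        split <;> push_cast <;> ring
      have h6 : (univ.filter (fun i : Fin k => (i:ℕ) < r)) = Iio (⟨r, hrk⟩ : Fin k) := by
        ext i
        simp [Fin.lt_def]
      simp only [h5, Finset.sum_add_distrib, Finset.sum_const, Finset.card_univ,
        ← Finset.mul_sum, Finset.sum_boole, h6, Fin.card_Iio, Fintype.card_fin]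
      push_cast
      ring
    rw [hT]
    simp only [h1, Finset.sum_sub_distrib, Finset.sum_const, Finset.card_univ, ← hn,
      nsmul_eq_mul, mul_one]
    simp only [h2]
    rw [h3, h4]
    ring
  -- choose a good permutation
  have hPne : ((P:ℝ)) ≠ 0 := by positivity
  have havg : ∃ σ ∈ (univ : Finset (Equiv.Perm V)),
      (2 * totalW w * M) / (P:ℝ) ≤ ∑ u, ∑ v, w u v * F (σ u) (σ v) := by
    apply Finset.exists_le_of_sum_le Finset.univ_nonempty
    rw [hsum_tot, Finset.sum_const, Finset.card_univ, ← hP, nsmul_eq_mul]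
    rw [mul_div_cancel₀ _ hPne]
  obtain ⟨σ, _, hσavg⟩ := havg
  refine ⟨X σ, hXpart σ, ?_⟩
  rw [ge_iff_le, hXcut σ]
  -- numeric facts
  have hW0 : 0 ≤ totalW w := by
    unfold totalW
    apply div_nonneg _ (by norm_num)
    exact Finset.sum_nonneg fun u _ => Finset.sum_nonneg fun v _ => hnn u v
  have hNn1 : (1:ℝ) < (n:ℝ) := by exact_mod_cast (by omega : 1 < n)
  have hnn1 : (0:ℝ) < (n:ℝ) * ((n:ℝ) - 1) := by nlinarith
  have hMP : M / (P:ℝ) = T / ((n:ℝ) * ((n:ℝ) - 1)) := by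
    have hn1ne : (n:ℝ) - 1 ≠ 0 := by linarith
    field_simp
    linear_combination hcount
  have hcastn : ((n:ℕ):ℝ) = (k:ℝ) * (q:ℝ) + (r:ℝ) := by
    rw [hnqr]
    push_cast
    ring
  have hkey := keyineq (k:ℝ) (q:ℝ) (r:ℝ) (by exact_mod_cast hk)
    (by exact_mod_cast hq1) (by positivity)
  rw [← hcastn, ← hTval] at hkey
  calc ((k : ℝ) - 1) / k * totalW w +
        ((k : ℝ) - 1) / (2 * k) *
          (1 - ((k : ℝ) - 2) ^ 2 / (4 * ((Fintype.card V : ℝ) - 1) * ((k : ℝ) - 1))) *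
          (2 * totalW w / (Fintype.card V : ℝ))
      = totalW w * (((k:ℝ)-1)/k + ((k:ℝ)-1)/((k:ℝ)*(n:ℝ))
          * (1 - ((k:ℝ)-2)^2/(4*((n:ℝ)-1)*((k:ℝ)-1)))) := by
        rw [← hn]
        ring
    _ ≤ totalW w * (T / ((n:ℝ) * ((n:ℝ) - 1))) := mul_le_mul_of_nonneg_left hkey hW0
    _ = totalW w * (M / (P:ℝ)) := by rw [hMP]
    _ = (2 * totalW w * M / (P:ℝ)) / 2 := by ring
    _ ≤ (∑ u, ∑ v, w u v * F (σ u) (σ v)) / 2 := by linarith
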